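/- Let Γ > 0 and α > 0. For every n ≥ 0, every 0 ≤ k < max(2^(n−1), 1), and every t ∈ [0,1], one has 0 ≤ Φ_{n,k}(t) ≤ Ψ_{n,k}(t); i.e., each Ornstein–Uhlenbeck basis element is dominated pointwise by the corresponding Haar-derived element. -/

import Mathlib

/-- The Haar-like basis element `Φ_{n,k}` for the Ornstein–Uhlenbeck process with
diffusion coefficient `Γ` and drift coefficient `α` (`Φ_{0,0}` for `n = 0`). -/
noncomputable def Phi (Γ α : ℝ) (n k : ℕ) (t : ℝ) : ℝ :=
  if n = 0 then
    Real.sqrt (Γ / α) * Real.exp (-α / 2) * Real.sinh (α * t) / Real.sqrt (Real.sinh α)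
  else if 2 * (k : ℝ) * 2 ^ (-(n : ℤ)) ≤ t ∧ t ≤ (2 * (k : ℝ) + 1) * 2 ^ (-(n : ℤ)) then
    Real.sqrt (Γ / α) * Real.sinh (α * (t - 2 * (k : ℝ) * 2 ^ (-(n : ℤ)))) /
      Real.sqrt (Real.sinh (α * 2 ^ (-(n : ℤ) + 1)))
  else if (2 * (k : ℝ) + 1) * 2 ^ (-(n : ℤ)) ≤ t ∧ t ≤ 2 * ((k : ℝ) + 1) * 2 ^ (-(n : ℤ)) then
    Real.sqrt (Γ / α) * Real.sinh (α * (2 * ((k : ℝ) + 1) * 2 ^ (-(n : ℤ)) - t)) /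
      Real.sqrt (Real.sinh (α * 2 ^ (-(n : ℤ) + 1)))
  else 0

/-- The Haar-derived basis element `Ψ_{n,k}` for the Wiener process with diffusion
coefficient `Γ` (`Ψ_{0,0}(t) = √Γ·t` for `n = 0`). -/
noncomputable def Psi (Γ : ℝ) (n k : ℕ) (t : ℝ) : ℝ :=
  if n = 0 then Real.sqrt Γ * t
  else if 2 * (k : ℝ) * 2 ^ (-(n : ℤ)) ≤ t ∧ t ≤ (2 * (k : ℝ) + 1) * 2 ^ (-(n : ℤ)) then
    Real.sqrt Γ * 2 ^ (((n : ℝ) - 1) / 2) * (t - 2 * (k : ℝ) * 2 ^ (-(n : ℤ)))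
  else if (2 * (k : ℝ) + 1) * 2 ^ (-(n : ℤ)) ≤ t ∧ t ≤ 2 * ((k : ℝ) + 1) * 2 ^ (-(n : ℤ)) then
    Real.sqrt Γ * 2 ^ (((n : ℝ) - 1) / 2) * (2 * ((k : ℝ) + 1) * 2 ^ (-(n : ℤ)) - t)
  else 0


lemma sinh_le_mul_cosh {x : ℝ} (hx : 0 ≤ x) : Real.sinh x ≤ x * Real.cosh x := by
  have hd : ∀ y : ℝ, HasDerivAt (fun z => z * Real.cosh z - Real.sinh z) (y * Real.sinh y) y := by
    intro y
    have h1 : HasDerivAt (fun z => z * Real.cosh z - Real.sinh z) (1 * Real.cosh y + y * Real.sinh y - Real.cosh y) y := ((hasDerivAt_id' y).mul (Real.hasDerivAt_cosh y)).sub (Real.hasDerivAt_sinh y)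
    convert h1 using 1
    ring
  have hm : Monotone (fun z => z * Real.cosh z - Real.sinh z) := by
    apply monotone_of_deriv_nonneg
    · exact fun y => (hd y).differentiableAt
    · intro y
      rw [(hd y).deriv]
      rcases le_or_gt 0 y with h | h
      · exact mul_nonneg h (by rwa [← Real.sinh_zero, Real.sinh_le_sinh])
      · have h2 : Real.sinh y ≤ 0 := by
          rw [← Real.sinh_zero]; exact Real.sinh_le_sinh.2 h.le
        nlinarith
  have := hm hx
  simp only [Real.sinh_zero, Real.cosh_zero, mul_one, zero_mul, sub_zero] at this
  linarith

lemma chord {s h : ℝ} (hs : 0 ≤ s) (hsh : s ≤ h) : h * Real.sinh s ≤ s * Real.sinh h := by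
  rcases eq_or_lt_of_le (hs.trans hsh) with rfl | hh
  · have : s = 0 := le_antisymm hsh hs
    simp [this]
  have hconv : ConvexOn ℝ (Set.Ici (0:ℝ)) Real.sinh := by
    apply convexOn_of_deriv2_nonneg (convex_Ici 0) Real.continuous_sinh.continuousOn
    · exact fun x _ => (Real.differentiable_sinh x).differentiableWithinAt
    · intro x _
      simp only [Real.deriv_sinh]
      exact (Real.differentiable_cosh x).differentiableWithinAt
    · intro x hx
      rw [interior_Ici] at hx
      have h2 : deriv^[2] Real.sinh x = Real.sinh x := by
        simp [Function.iterate_succ_apply', Real.deriv_sinh, Real.deriv_cosh]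
      rw [h2, ← Real.sinh_zero]
      exact Real.sinh_le_sinh.2 hx.le
  have ha : (0:ℝ) ≤ 1 - s / h := by
    rw [sub_nonneg]
    exact (div_le_one hh).2 hsh
  have hb : (0:ℝ) ≤ s / h := by positivity
  have key := hconv.2 (Set.mem_Ici.2 le_rfl) (Set.mem_Ici.2 (hs.trans hsh)) ha hb (by ring)
  simp only [smul_eq_mul, mul_zero, zero_add, Real.sinh_zero, add_zero] at key
  rw [div_mul_cancel₀ _ hh.ne'] at key
  calc h * Real.sinh s ≤ h * (s / h * Real.sinh h) := by
        exact mul_le_mul_of_nonneg_left key hh.le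
    _ = s * Real.sinh h := by field_simp

lemma sinh_nonneg' {x : ℝ} (hx : 0 ≤ x) : 0 ≤ Real.sinh x := by
  rw [← Real.sinh_zero]; exact Real.sinh_le_sinh.2 hx

lemma sinh_pos' {x : ℝ} (hx : 0 < x) : 0 < Real.sinh x := by
  rw [← Real.sinh_zero]; exact Real.sinh_lt_sinh.2 hx

lemma core (Γ α P s : ℝ) (hΓ : 0 < Γ) (hα : 0 < α) (hP : 0 < P) (hs : 0 ≤ s) (hsP : s ≤ P) :
    Real.sqrt (Γ / α) * Real.sinh (α * s) / Real.sqrt (Real.sinh (α * (2 * P))) ≤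
      Real.sqrt Γ * (1 / Real.sqrt (2 * P)) * s := by
  set X := Real.sinh (α * s) with hXdef
  set Y := Real.sinh (α * P) with hYdef
  set C := Real.cosh (α * P) with hCdef
  have hXnn : 0 ≤ X := sinh_nonneg' (by positivity)
  have hYnn : 0 ≤ Y := sinh_nonneg' (by positivity)
  have hCpos : 0 < C := Real.cosh_pos _
  have hS : 0 < Real.sinh (α * (2 * P)) := sinh_pos' (by positivity)
  have hdbl : Real.sinh (α * (2 * P)) = 2 * Y * C := by
    rw [show α * (2 * P) = 2 * (α * P) by ring, Real.sinh_two_mul]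
  have hchord : P * X ≤ s * Y := by
    have h := chord (mul_nonneg hα.le hs) (by nlinarith : α * s ≤ α * P)
    nlinarith [h, hα]
  have hA : Y ≤ (α * P) * C := sinh_le_mul_cosh (by positivity)
  have hX : X ≤ s / P * Y := by
    rw [div_mul_eq_mul_div, le_div_iff₀ hP]
    linarith
  have hpoly : X ^ 2 * (2 * P) ≤ α * s ^ 2 * Real.sinh (α * (2 * P)) := by
    rw [hdbl]
    have hY2 : Y ^ 2 ≤ (α * P * C) * Y := by nlinarith
    calc X ^ 2 * (2 * P) ≤ (s / P * Y) ^ 2 * (2 * P) := by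
          have := pow_le_pow_left₀ hXnn hX 2
          nlinarith
      _ = 2 * s ^ 2 * Y ^ 2 / P := by field_simp
      _ ≤ 2 * s ^ 2 * ((α * P * C) * Y) / P := by
          gcongr
      _ = α * s ^ 2 * (2 * Y * C) := by field_simp
  have e1 : Real.sqrt (Γ / α) * X / Real.sqrt (Real.sinh (α * (2 * P))) =
      Real.sqrt (Γ / α * X ^ 2 / Real.sinh (α * (2 * P))) := by
    rw [Real.sqrt_div (show (0:ℝ) ≤ Γ / α * X ^ 2 by positivity) (Real.sinh (α * (2 * P))),
      Real.sqrt_mul (show (0:ℝ) ≤ Γ / α by positivity) (X ^ 2), Real.sqrt_sq hXnn]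
  have e2 : Real.sqrt Γ * (1 / Real.sqrt (2 * P)) * s = Real.sqrt (Γ / (2 * P) * s ^ 2) := by
    rw [Real.sqrt_mul (show (0:ℝ) ≤ Γ / (2 * P) by positivity) (s ^ 2), Real.sqrt_sq hs,
      Real.sqrt_div hΓ.le (2 * P)]
    ring
  rw [e1, e2]
  apply Real.sqrt_le_sqrt
  rw [div_le_iff₀ hS]
  calc Γ / α * X ^ 2 = Γ / (2 * P * α) * (X ^ 2 * (2 * P)) := by field_simp
    _ ≤ Γ / (2 * P * α) * (α * s ^ 2 * Real.sinh (α * (2 * P))) := by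
        apply mul_le_mul_of_nonneg_left hpoly (by positivity)
    _ = Γ / (2 * P) * s ^ 2 * Real.sinh (α * (2 * P)) := by field_simp



lemma core0 (Γ α t : ℝ) (hΓ : 0 < Γ) (hα : 0 < α) (ht0 : 0 ≤ t) (ht1 : t ≤ 1) :
    Real.sqrt (Γ / α) * Real.exp (-α / 2) * Real.sinh (α * t) / Real.sqrt (Real.sinh α) ≤
      Real.sqrt Γ * t := by
  set X := Real.sinh (α * t) with hXdef
  set S := Real.sinh α with hSdef
  have hXnn : 0 ≤ X := sinh_nonneg' (by positivity)
  have hS : 0 < S := sinh_pos' hα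
  have hX : X ≤ t * S := by
    have h := chord (mul_nonneg hα.le ht0) (by nlinarith : α * t ≤ α)
    nlinarith [h, hα]
  have hbound : Real.exp (-α) * S ≤ α := by
    have h1 := Real.add_one_le_exp (-(2 * α))
    have hsinh : S = (Real.exp α - Real.exp (-α)) / 2 := Real.sinh_eq α
    have he : Real.exp (-α) * Real.exp α = 1 := by rw [← Real.exp_add]; simp
    have he2 : Real.exp (-(2 * α)) = Real.exp (-α) * Real.exp (-α) := by
      rw [← Real.exp_add]; ring_nf
    nlinarith [h1, he, he2, Real.exp_pos (-α)]
  have hE : Real.exp (-α / 2) ^ 2 = Real.exp (-α) := by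
    rw [sq, ← Real.exp_add]; ring_nf
  have e1 : Real.sqrt (Γ / α) * Real.exp (-α / 2) * X / Real.sqrt S =
      Real.sqrt (Γ / α * Real.exp (-α) * X ^ 2 / S) := by
    rw [← hE,
      Real.sqrt_div (show (0:ℝ) ≤ Γ / α * Real.exp (-α / 2) ^ 2 * X ^ 2 by positivity) S,
      Real.sqrt_mul (show (0:ℝ) ≤ Γ / α * Real.exp (-α / 2) ^ 2 by positivity) (X ^ 2),
      Real.sqrt_mul (show (0:ℝ) ≤ Γ / α by positivity) (Real.exp (-α / 2) ^ 2),
      Real.sqrt_sq hXnn, Real.sqrt_sq (Real.exp_pos _).le]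
  have e2 : Real.sqrt Γ * t = Real.sqrt (Γ * t ^ 2) := by
    rw [Real.sqrt_mul hΓ.le (t ^ 2), Real.sqrt_sq ht0]
  rw [e1, e2]
  apply Real.sqrt_le_sqrt
  rw [div_le_iff₀ hS]
  have hXsq : X ^ 2 ≤ t ^ 2 * S ^ 2 := by nlinarith [hX, hXnn]
  calc Γ / α * Real.exp (-α) * X ^ 2 ≤ Γ / α * Real.exp (-α) * (t ^ 2 * S ^ 2) := by
        apply mul_le_mul_of_nonneg_left hXsq (by positivity)
    _ = Γ / α * t ^ 2 * S * (Real.exp (-α) * S) := by ring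
    _ ≤ Γ / α * t ^ 2 * S * α := by
        apply mul_le_mul_of_nonneg_left hbound (by positivity)
    _ = Γ * t ^ 2 * S := by field_simp

lemma pow_eq (n : ℕ) : (2:ℝ) ^ (((n:ℝ) - 1) / 2) = 1 / Real.sqrt (2 * (2:ℝ) ^ (-(n:ℤ))) := by
  have h2 : (0:ℝ) < 2 := two_pos
  rw [show ((2:ℝ)) ^ (-(n:ℤ)) = (2:ℝ) ^ (((-(n:ℤ) : ℤ) : ℝ)) from (Real.rpow_intCast 2 _).symm,
    show (2:ℝ) * (2:ℝ) ^ (((-(n:ℤ) : ℤ) : ℝ)) = (2:ℝ) ^ (1 + (((-(n:ℤ) : ℤ) : ℝ))) by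
      rw [Real.rpow_add h2, Real.rpow_one],
    Real.sqrt_eq_rpow, ← Real.rpow_mul h2.le, one_div, ← Real.rpow_neg h2.le]
  congr 1
  push_cast
  ring

lemma zpow_eq (n : ℕ) : (2:ℝ) ^ (-(n:ℤ) + 1) = 2 * (2:ℝ) ^ (-(n:ℤ)) := by
  rw [zpow_add₀ (two_ne_zero) (-(n:ℤ)) 1, zpow_one]
  ring
/-- Each Ornstein–Uhlenbeck basis element is dominated pointwise by the corresponding
Haar-derived element: for every `n ≥ 0`, `0 ≤ k < max(2^(n−1), 1)` and `t ∈ [0,1]`,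
`0 ≤ Φ_{n,k}(t) ≤ Ψ_{n,k}(t)`. -/
theorem phi_le_psi (Γ α : ℝ) (hΓ : 0 < Γ) (hα : 0 < α) (n k : ℕ)
    (hk : k < max (2 ^ (n - 1)) 1) (t : ℝ) (ht : t ∈ Set.Icc (0 : ℝ) 1) :
    0 ≤ Phi Γ α n k t ∧ Phi Γ α n k t ≤ Psi Γ n k t := by
  obtain ⟨ht0, ht1⟩ := ht
  rcases eq_or_ne n 0 with rfl | hn
  · rw [Phi, Psi, if_pos rfl, if_pos rfl]
    refine ⟨?_, core0 Γ α t hΓ hα ht0 ht1⟩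
    apply div_nonneg _ (Real.sqrt_nonneg _)
    exact mul_nonneg (mul_nonneg (Real.sqrt_nonneg _) (Real.exp_pos _).le)
      (sinh_nonneg' (by positivity))
  · rw [Phi, Psi, if_neg hn, if_neg hn]
    have hP : (0:ℝ) < 2 ^ (-(n:ℤ)) := by positivity
    split_ifs with h1 h2
    · obtain ⟨ha, hb⟩ := h1
      have hs0 : 0 ≤ t - 2 * (k:ℝ) * 2 ^ (-(n:ℤ)) := by linarith
      have hsP : t - 2 * (k:ℝ) * 2 ^ (-(n:ℤ)) ≤ 2 ^ (-(n:ℤ)) := by nlinarith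
      constructor
      · apply div_nonneg _ (Real.sqrt_nonneg _)
        exact mul_nonneg (Real.sqrt_nonneg _) (sinh_nonneg' (mul_nonneg hα.le hs0))
      · rw [zpow_eq n, pow_eq n]
        exact core Γ α (2 ^ (-(n:ℤ))) (t - 2 * (k:ℝ) * 2 ^ (-(n:ℤ))) hΓ hα hP hs0 hsP
    · obtain ⟨ha, hb⟩ := h2
      have hs0 : 0 ≤ 2 * ((k:ℝ) + 1) * 2 ^ (-(n:ℤ)) - t := by linarith
      have hsP : 2 * ((k:ℝ) + 1) * 2 ^ (-(n:ℤ)) - t ≤ 2 ^ (-(n:ℤ)) := by nlinarith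
      constructor
      · apply div_nonneg _ (Real.sqrt_nonneg _)
        exact mul_nonneg (Real.sqrt_nonneg _) (sinh_nonneg' (mul_nonneg hα.le hs0))
      · rw [zpow_eq n, pow_eq n]
        exact core Γ α (2 ^ (-(n:ℤ))) (2 * ((k:ℝ) + 1) * 2 ^ (-(n:ℤ)) - t) hΓ hα hP hs0 hsP
    · exact ⟨le_refl 0, le_refl 0⟩
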